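/- Let H^{(1)}, …, H^{(m)} (m ≥ 1) each be a one-dimensional k-local Hamiltonian with unit-norm terms on the n-site chain, let O be an operator supported on an adjacent interval L with |L| = l₀, and set ã := l₀/k. Let w > 0 be the unique positive real with w·e^w = e·(m + ã). Then ‖ad_{H^{(m)}} ∘ ⋯ ∘ ad_{H^{(1)}}(O)‖ ≤ ‖O‖ · (6k)^m · ((m+ã)/w)^{(m+ã) − (m+ã)/w}. -/

import Mathlib

open scoped Matrix.Norms.L2Operator

/-- Operators on the `n`-site chain with local dimension `d`: matrices indexed by
configurations `Fin n → Fin d`, acting on `(ℂ^d)^{⊗n}`, with the ℓ²→ℓ² operator norm. -/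
abbrev ChainOp (n d : ℕ) := Matrix (Fin n → Fin d) (Fin n → Fin d) ℂ

/-- `M` is supported on the set of sites `L`: entries vanish whenever the two configurations
differ at a site outside `L`, and entries depend only on the restrictions of the
configurations to `L`. -/
def SupportedOn {n d : ℕ} (M : ChainOp n d) (L : Finset (Fin n)) : Prop :=
  (∀ x y : Fin n → Fin d, (∃ i ∉ L, x i ≠ y i) → M x y = 0) ∧
  (∀ x y x' y' : Fin n → Fin d,
      (∀ i ∈ L, x i = x' i) → (∀ i ∈ L, y i = y' i) →
      (∀ i ∉ L, x i = y i) → (∀ i ∉ L, x' i = y' i) → M x y = M x' y')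

/-- The interval of sites `{i : a ≤ i ≤ b}` (automatically intersected with `{0,…,n-1}`). -/
def chainInterval (n : ℕ) (a b : ℕ) : Finset (Fin n) :=
  Finset.univ.filter fun i : Fin n => a ≤ (i : ℕ) ∧ (i : ℕ) ≤ b

/-- `H` is a one-dimensional `k`-local Hamiltonian with unit-norm terms:
`H = Σ_j h_j` where `h_j` is supported on `{j, …, j+k-1} ∩ {0,…,n-1}` and `‖h_j‖ ≤ 1`. -/
def IsLocalHam (n d k : ℕ) (H : ChainOp n d) : Prop :=
  ∃ h : Fin n → ChainOp n d,
    H = ∑ j, h j ∧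
    ∀ j : Fin n, SupportedOn (h j) (chainInterval n j ((j : ℕ) + k - 1)) ∧ ‖h j‖ ≤ 1


/-- The adjoint action `ad_H(O) := H·O − O·H`. -/
noncomputable def ad {n d : ℕ} (H O : ChainOp n d) : ChainOp n d := H * O - O * H

/-- The iterated commutator `ad_{H^{(m)}} ∘ ⋯ ∘ ad_{H^{(2)}} ∘ ad_{H^{(1)}} (O)`. -/
noncomputable def multiAd {n d : ℕ} : {m : ℕ} → (Fin m → ChainOp n d) → ChainOp n d → ChainOp n d
  | 0, _, O => O
  | m + 1, Hs, O => ad (Hs (Fin.last m)) (multiAd (fun j => Hs j.castSucc) O)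

/-- The factor `K_s(π)`: it equals `k − 1` if `π_s ≠ 0`, and
`l₀ + (k−1)·#{j < s : π_j ≠ 0}` if `π_s = 0`. -/
def Kfac (k l₀ : ℕ) {m : ℕ} (π : Fin m → SignType) (s : Fin m) : ℕ :=
  if π s = 0 then
    l₀ + (k - 1) * (Finset.univ.filter fun j : Fin m => j < s ∧ π j ≠ 0).card
  else k - 1

variable {n d : ℕ}

lemma supportedOn_mono {M : ChainOp n d} {L L' : Finset (Fin n)}
    (h : SupportedOn M L) (hLL : L ⊆ L') : SupportedOn M L' := by
  obtain ⟨h1, h2⟩ := h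
  constructor
  · rintro x y ⟨i, hi, hxy⟩
    exact h1 x y ⟨i, fun hmem => hi (hLL hmem), hxy⟩
  · intro x y x' y' hx hy hxy hxy'
    by_cases hcase : ∀ i ∉ L, x i = y i
    · have hcase' : ∀ i ∉ L, x' i = y' i := by
        intro i hi
        by_cases hiL' : i ∈ L'
        · rw [← hx i hiL', ← hy i hiL']; exact hcase i hi
        · exact hxy' i hiL'
      exact h2 x y x' y' (fun i hi => hx i (hLL hi)) (fun i hi => hy i (hLL hi)) hcase hcase'
    · push_neg at hcase
      obtain ⟨i, hiL, hne⟩ := hcase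
      have hiL'' : i ∈ L' := by
        by_contra hc
        exact hne (hxy i hc)
      have hne' : x' i ≠ y' i := by rw [← hx i hiL'', ← hy i hiL'']; exact hne
      rw [h1 x y ⟨i, hiL, hne⟩, h1 x' y' ⟨i, hiL, hne'⟩]

lemma supportedOn_zero (L : Finset (Fin n)) : SupportedOn (0 : ChainOp n d) L := by
  constructor
  · intro x y _; rfl
  · intro _ _ _ _ _ _ _ _; rfl

lemma supportedOn_univ (M : ChainOp n d) : SupportedOn M Finset.univ := by
  constructor
  · rintro x y ⟨i, hi, -⟩; exact absurd (Finset.mem_univ i) hi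
  · intro x y x' y' hx hy _ _
    have : x = x' := funext fun i => hx i (Finset.mem_univ i)
    have h2 : y = y' := funext fun i => hy i (Finset.mem_univ i)
    rw [this, h2]

lemma supportedOn_sub {M N : ChainOp n d} {L : Finset (Fin n)}
    (hM : SupportedOn M L) (hN : SupportedOn N L) : SupportedOn (M - N) L := by
  constructor
  · intro x y hxy
    simp only [Matrix.sub_apply, hM.1 x y hxy, hN.1 x y hxy, sub_zero]
  · intro x y x' y' hx hy hxy hxy'
    simp only [Matrix.sub_apply, hM.2 x y x' y' hx hy hxy hxy', hN.2 x y x' y' hx hy hxy hxy']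

lemma supportedOn_add {M N : ChainOp n d} {L : Finset (Fin n)}
    (hM : SupportedOn M L) (hN : SupportedOn N L) : SupportedOn (M + N) L := by
  constructor
  · intro x y hxy
    simp only [Matrix.add_apply, hM.1 x y hxy, hN.1 x y hxy, add_zero]
  · intro x y x' y' hx hy hxy hxy'
    simp only [Matrix.add_apply, hM.2 x y x' y' hx hy hxy hxy', hN.2 x y x' y' hx hy hxy hxy']

lemma supportedOn_sum {ι : Type*} (S : Finset ι) (f : ι → ChainOp n d) (L : Finset (Fin n))
    (h : ∀ j ∈ S, SupportedOn (f j) L) : SupportedOn (∑ j ∈ S, f j) L := by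
  classical
  induction S using Finset.induction_on with
  | empty => simpa using supportedOn_zero L
  | insert _ _ hnot ih =>
    rename_i a s
    rw [Finset.sum_insert hnot]
    exact supportedOn_add (h a (Finset.mem_insert_self a s))
      (ih fun j hj => h j (Finset.mem_insert_of_mem hj))

lemma supportedOn_mul {A B : ChainOp n d} {L : Finset (Fin n)}
    (hA : SupportedOn A L) (hB : SupportedOn B L) : SupportedOn (A * B) L := by
  classical
  constructor
  · rintro x y ⟨i, hi, hxy⟩
    rw [Matrix.mul_apply]
    apply Finset.sum_eq_zero
    intro z _
    by_cases hz : z i = x i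
    · have : B z y = 0 := hB.1 z y ⟨i, hi, by rw [hz]; exact hxy⟩
      rw [this, mul_zero]
    · have : A x z = 0 := hA.1 x z ⟨i, hi, fun hc => hz hc.symm⟩
      rw [this, zero_mul]
  · intro x y x' y' hx hy hxy hxy'
    rw [Matrix.mul_apply, Matrix.mul_apply]
    set e : (Fin n → Fin d) ≃ (Fin n → Fin d) :=
      Equiv.piCongrRight (fun i => if i ∈ L then Equiv.refl (Fin d) else Equiv.swap (x i) (x' i))
      with he
    have heL : ∀ (z : Fin n → Fin d) (i : Fin n), i ∈ L → e z i = z i := by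
      intro z i hi
      simp [he, Equiv.piCongrRight, hi]
    have heNL : ∀ (z : Fin n → Fin d) (i : Fin n), i ∉ L →
        e z i = Equiv.swap (x i) (x' i) (z i) := by
      intro z i hi
      simp [he, Equiv.piCongrRight, hi]
    refine Fintype.sum_equiv e _ _ ?_
    intro z
    by_cases hzx : ∀ i ∉ L, z i = x i
    · have hez : ∀ i ∉ L, e z i = x' i := by
        intro i hi
        rw [heNL z i hi, hzx i hi, Equiv.swap_apply_left]
      have h1 : A x z = A x' (e z) := by
        refine hA.2 x z x' (e z) hx (fun i hi => (heL z i hi).symm) ?_ ?_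
        · intro i hi; exact (hzx i hi).symm
        · intro i hi; exact (hez i hi).symm
      have h2 : B z y = B (e z) y' := by
        refine hB.2 z y (e z) y' (fun i hi => (heL z i hi).symm) hy ?_ ?_
        · intro i hi; rw [hzx i hi]; exact hxy i hi
        · intro i hi; rw [hez i hi]; exact hxy' i hi
      rw [h1, h2]
    · push_neg at hzx
      obtain ⟨i, hi, hne⟩ := hzx
      have h1 : A x z = 0 := hA.1 x z ⟨i, hi, fun hc => hne hc.symm⟩
      have h2 : A x' (e z) = 0 := by
        apply hA.1 x' (e z)
        refine ⟨i, hi, fun hc => ?_⟩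
        rw [heNL z i hi] at hc
        by_cases hzz : z i = x' i
        · rw [hzz, Equiv.swap_apply_right] at hc
          exact hne (hzz.trans hc)
        · rw [Equiv.swap_apply_of_ne_of_ne hne hzz] at hc
          exact hzz hc.symm
      rw [h1, h2, zero_mul, zero_mul]

lemma mul_comm_of_disjoint {A B : ChainOp n d} {L L' : Finset (Fin n)}
    (hA : SupportedOn A L) (hB : SupportedOn B L') (hdisj : Disjoint L L') :
    A * B = B * A := by
  classical
  ext x y
  rw [Matrix.mul_apply, Matrix.mul_apply]
  have hLL' : ∀ i : Fin n, i ∈ L → i ∉ L' := fun i hi hi' =>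
    Finset.disjoint_left.mp hdisj hi hi'
  have hL'L : ∀ i : Fin n, i ∈ L' → i ∉ L := fun i hi hi' =>
    Finset.disjoint_left.mp hdisj hi' hi
  set z₀ : Fin n → Fin d := fun i => if i ∈ L then y i else x i with hz₀
  set u₀ : Fin n → Fin d := fun i => if i ∈ L' then y i else x i with hu₀
  have hsum1 : ∑ z, A x z * B z y = A x z₀ * B z₀ y := by
    apply Finset.sum_eq_single_of_mem z₀ (Finset.mem_univ _)
    intro z _ hz
    have : ∃ i, z i ≠ z₀ i := by
      by_contra hc
      push_neg at hc
      exact hz (funext hc)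
    obtain ⟨i, hi⟩ := this
    by_cases hiL : i ∈ L
    · have hzi : z i ≠ y i := by simpa [hz₀, hiL] using hi
      have : B z y = 0 := hB.1 z y ⟨i, hLL' i hiL, hzi⟩
      rw [this, mul_zero]
    · have hzi : z i ≠ x i := by simpa [hz₀, hiL] using hi
      have : A x z = 0 := hA.1 x z ⟨i, hiL, fun hc => hzi hc.symm⟩
      rw [this, zero_mul]
  have hsum2 : ∑ z, B x z * A z y = B x u₀ * A u₀ y := by
    apply Finset.sum_eq_single_of_mem u₀ (Finset.mem_univ _)
    intro z _ hz
    have : ∃ i, z i ≠ u₀ i := by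
      by_contra hc
      push_neg at hc
      exact hz (funext hc)
    obtain ⟨i, hi⟩ := this
    by_cases hiL : i ∈ L'
    · have hzi : z i ≠ y i := by simpa [hu₀, hiL] using hi
      have : A z y = 0 := hA.1 z y ⟨i, hL'L i hiL, hzi⟩
      rw [this, mul_zero]
    · have hzi : z i ≠ x i := by simpa [hu₀, hiL] using hi
      have : B x z = 0 := hB.1 x z ⟨i, hiL, fun hc => hzi hc.symm⟩
      rw [this, zero_mul]
  rw [hsum1, hsum2]
  by_cases hxy : ∀ i, i ∉ L → i ∉ L' → x i = y i
  · have h1 : A x z₀ = A u₀ y := by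
      refine hA.2 x z₀ u₀ y ?_ ?_ ?_ ?_
      · intro i hi
        simp [hu₀, hLL' i hi]
      · intro i hi
        simp [hz₀, hi]
      · intro i hi
        by_cases hiL' : i ∈ L'
        · simp [hz₀, hi]
        · simp [hz₀, hi, hxy i hi hiL']
      · intro i hi
        by_cases hiL' : i ∈ L'
        · simp [hu₀, hiL']
        · simp [hu₀, hiL', hxy i hi hiL']
    have h2 : B z₀ y = B x u₀ := by
      refine (hB.2 x u₀ z₀ y ?_ ?_ ?_ ?_).symm
      · intro i hi
        simp [hz₀, hL'L i hi]
      · intro i hi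
        simp [hu₀, hi]
      · intro i hi
        by_cases hiL : i ∈ L
        · simp [hu₀, hi]
        · simp [hu₀, hi, hxy i hiL hi]
      · intro i hi
        by_cases hiL : i ∈ L
        · simp [hz₀, hiL]
        · simp [hz₀, hiL, hxy i hiL hi]
    rw [h1, h2]
    ring
  · push_neg at hxy
    obtain ⟨i, hiL, hiL', hne⟩ := hxy
    have hz₀i : z₀ i = x i := by simp [hz₀, hiL]
    have hu₀i : u₀ i = x i := by simp [hu₀, hiL']
    have h1 : B z₀ y = 0 := hB.1 z₀ y ⟨i, hiL', by rw [hz₀i]; exact hne⟩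
    have h2 : A u₀ y = 0 := hA.1 u₀ y ⟨i, hiL, by rw [hu₀i]; exact hne⟩
    rw [h1, h2, mul_zero, mul_zero]

lemma ad_eq_zero_of_disjoint {H O : ChainOp n d} {L L' : Finset (Fin n)}
    (hH : SupportedOn H L) (hO : SupportedOn O L') (hdisj : Disjoint L L') :
    ad H O = 0 := by
  rw [ad, mul_comm_of_disjoint hH hO hdisj, sub_self]

lemma supportedOn_ad {H O : ChainOp n d} {L : Finset (Fin n)}
    (hH : SupportedOn H L) (hO : SupportedOn O L) : SupportedOn (ad H O) L :=
  supportedOn_sub (supportedOn_mul hH hO) (supportedOn_mul hO hH)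

lemma norm_ad_le (H O : ChainOp n d) : ‖ad H O‖ ≤ 2 * ‖H‖ * ‖O‖ := by
  calc ‖ad H O‖ ≤ ‖H * O‖ + ‖O * H‖ := norm_sub_le _ _
    _ ≤ ‖H‖ * ‖O‖ + ‖O‖ * ‖H‖ := add_le_add (Matrix.l2_opNorm_mul H O) (Matrix.l2_opNorm_mul O H)
    _ = 2 * ‖H‖ * ‖O‖ := by ring

lemma ad_sum_left {ι : Type*} (S : Finset ι) (h : ι → ChainOp n d) (O : ChainOp n d) :
    ad (∑ j ∈ S, h j) O = ∑ j ∈ S, ad (h j) O := by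
  simp only [ad, Finset.sum_mul, Finset.mul_sum, Finset.sum_sub_distrib]

lemma ad_sum_right {ι : Type*} (S : Finset ι) (H : ChainOp n d) (f : ι → ChainOp n d) :
    ad H (∑ j ∈ S, f j) = ∑ j ∈ S, ad H (f j) := by
  simp only [ad, Finset.sum_mul, Finset.mul_sum, Finset.sum_sub_distrib]

lemma ad_zero (H : ChainOp n d) : ad H 0 = 0 := by simp [ad]

lemma mem_chainInterval {a b : ℕ} {i : Fin n} :
    i ∈ chainInterval n a b ↔ a ≤ (i : ℕ) ∧ (i : ℕ) ≤ b := by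
  simp [chainInterval]

lemma chainInterval_subset {a b a' b' : ℕ} (ha : a' ≤ a) (hb : b ≤ b') :
    chainInterval n a b ⊆ chainInterval n a' b' := by
  intro i hi
  rw [mem_chainInterval] at *
  omega

lemma chainInterval_disjoint_left {a b a' b' : ℕ} (h : b < a') :
    Disjoint (chainInterval n a b) (chainInterval n a' b') := by
  rw [Finset.disjoint_left]
  intro i hi hi'
  rw [mem_chainInterval] at hi hi'
  omega

lemma chainInterval_disjoint_right {a b a' b' : ℕ} (h : b' < a) :
    Disjoint (chainInterval n a b) (chainInterval n a' b') := by
  rw [Finset.disjoint_left]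
  intro i hi hi'
  rw [mem_chainInterval] at hi hi'
  omega

def negCt {m : ℕ} (π : Fin m → SignType) : ℕ := (Finset.univ.filter fun j => π j = -1).card

def posCt {m : ℕ} (π : Fin m → SignType) : ℕ := (Finset.univ.filter fun j => π j = 1).card

def nzCt {m : ℕ} (π : Fin m → SignType) : ℕ := (Finset.univ.filter fun j => π j ≠ 0).card

lemma negCt_add_posCt {m : ℕ} (π : Fin m → SignType) : negCt π + posCt π = nzCt π := by
  classical
  unfold negCt posCt nzCt
  rw [← Finset.card_union_of_disjoint]
  · congr 1
    ext j
    simp only [Finset.mem_union, Finset.mem_filter, Finset.mem_univ, true_and]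
    cases h : π j <;> simp_all <;> decide
  · rw [Finset.disjoint_left]
    intro j hj hj'
    simp only [Finset.mem_filter, Finset.mem_univ, true_and] at hj hj'
    rw [hj] at hj'
    exact absurd hj' (by decide)

lemma norm_sum_ad_le (S : Finset (Fin n)) (h : Fin n → ChainOp n d)
    (hnorm : ∀ j ∈ S, ‖h j‖ ≤ 1) (X : ChainOp n d) :
    ‖∑ j ∈ S, ad (h j) X‖ ≤ 2 * S.card * ‖X‖ := by
  calc ‖∑ j ∈ S, ad (h j) X‖ ≤ ∑ j ∈ S, ‖ad (h j) X‖ := norm_sum_le _ _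
    _ ≤ ∑ j ∈ S, 2 * ‖X‖ := by
        refine Finset.sum_le_sum fun j hj => le_trans (norm_ad_le _ _) ?_
        nlinarith [hnorm j hj, norm_nonneg (h j), norm_nonneg X]
    _ = 2 * S.card * ‖X‖ := by rw [Finset.sum_const, nsmul_eq_mul]; ring

lemma card_filter_fin_succ {m : ℕ} (P : Fin (m + 1) → Prop) [DecidablePred P] :
    (Finset.univ.filter P).card =
      (Finset.univ.filter fun j : Fin m => P j.castSucc).card
        + (if P (Fin.last m) then 1 else 0) := by
  rw [Finset.card_filter, Finset.card_filter, Fin.sum_univ_castSucc]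

lemma card_filter_lt_castSucc {m : ℕ} (P : Fin (m + 1) → Prop) [DecidablePred P] (s : Fin m) :
    (Finset.univ.filter fun j : Fin (m + 1) => j < s.castSucc ∧ P j).card =
      (Finset.univ.filter fun j : Fin m => j < s ∧ P j.castSucc).card := by
  refine (Finset.card_bij (fun (j : Fin m) _ => j.castSucc) ?_ ?_ ?_).symm
  · intro j hj
    simp only [Finset.mem_filter, Finset.mem_univ, true_and] at hj ⊢
    exact ⟨Fin.castSucc_lt_castSucc_iff.mpr hj.1, hj.2⟩
  · intro j _ j' _ hjj
    exact Fin.castSucc_injective _ hjj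
  · intro j hj
    simp only [Finset.mem_filter, Finset.mem_univ, true_and] at hj
    have hne : j ≠ Fin.last m := (hj.1.trans (Fin.castSucc_lt_last s)).ne
    obtain ⟨y, rfl⟩ := Fin.exists_castSucc_eq.mpr hne
    exact ⟨y, Finset.mem_filter.mpr
      ⟨Finset.mem_univ _, ⟨Fin.castSucc_lt_castSucc_iff.mp hj.1, hj.2⟩⟩, rfl⟩

lemma card_filter_lt_last {m : ℕ} (P : Fin (m + 1) → Prop) [DecidablePred P] :
    (Finset.univ.filter fun j : Fin (m + 1) => j < Fin.last m ∧ P j).card =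
      (Finset.univ.filter fun j : Fin m => P j.castSucc).card := by
  refine (Finset.card_bij (fun (j : Fin m) _ => j.castSucc) ?_ ?_ ?_).symm
  · intro j hj
    simp only [Finset.mem_filter, Finset.mem_univ, true_and] at hj ⊢
    exact ⟨Fin.castSucc_lt_last j, hj⟩
  · intro j _ j' _ hjj
    exact Fin.castSucc_injective _ hjj
  · intro j hj
    simp only [Finset.mem_filter, Finset.mem_univ, true_and] at hj
    obtain ⟨y, rfl⟩ := Fin.exists_castSucc_eq.mpr hj.1.ne
    exact ⟨y, Finset.mem_filter.mpr ⟨Finset.mem_univ _, hj.2⟩, rfl⟩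

lemma kfac_castSucc {m : ℕ} (k L : ℕ) (π' : Fin (m + 1) → SignType) (s : Fin m) :
    Kfac k L π' s.castSucc = Kfac k L (fun j => π' j.castSucc) s := by
  unfold Kfac
  rw [card_filter_lt_castSucc (fun j => π' j ≠ 0) s]

lemma kfac_last_zero {m : ℕ} (k L : ℕ) (π' : Fin (m + 1) → SignType)
    (h : π' (Fin.last m) = 0) :
    Kfac k L π' (Fin.last m) = L + (k - 1) * nzCt (fun j : Fin m => π' j.castSucc) := by
  unfold Kfac nzCt
  rw [if_pos h, card_filter_lt_last (fun j => π' j ≠ 0)]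

lemma kfac_last_ne {m : ℕ} (k L : ℕ) (π' : Fin (m + 1) → SignType)
    (h : π' (Fin.last m) ≠ 0) : Kfac k L π' (Fin.last m) = k - 1 := by
  unfold Kfac
  rw [if_neg h]

lemma card_le_of_val_mem_Ico (S : Finset (Fin n)) (lo hi : ℕ)
    (h : ∀ j ∈ S, (j : ℕ) ∈ Finset.Ico lo hi) : S.card ≤ hi - lo := by
  calc S.card ≤ (Finset.Ico lo hi).card :=
        Finset.card_le_card_of_injOn (fun j => (j : ℕ)) h
          (fun a _ b _ hab => Fin.val_injective hab)
    _ = hi - lo := Nat.card_Ico lo hi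

def tagF (k aP bP : ℕ) (j : Fin n) : SignType :=
  if (j : ℕ) < aP then -1 else if (j : ℕ) + (k - 1) ≤ bP then 0 else 1

lemma tagF_eq_neg_iff {k aP bP : ℕ} {j : Fin n} :
    tagF k aP bP j = -1 ↔ (j : ℕ) < aP := by
  unfold tagF
  split_ifs with h1 h2 <;> simp_all <;> decide

lemma tagF_eq_zero_iff {k aP bP : ℕ} {j : Fin n} :
    tagF k aP bP j = 0 ↔ ¬ (j : ℕ) < aP ∧ (j : ℕ) + (k - 1) ≤ bP := by
  unfold tagF
  split_ifs with h1 h2 <;> simp_all <;> decide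

lemma tagF_eq_pos_iff {k aP bP : ℕ} {j : Fin n} :
    tagF k aP bP j = 1 ↔ ¬ (j : ℕ) < aP ∧ ¬ (j : ℕ) + (k - 1) ≤ bP := by
  unfold tagF
  split_ifs with h1 h2 <;> simp_all <;> decide

set_option maxHeartbeats 2000000 in

lemma main_ind (k : ℕ) (hk : 2 ≤ k) (a b L : ℕ) (hab : b + 2 = a + k + L)
    (O : ChainOp n d) (hO : SupportedOn O (chainInterval n a b)) :
    ∀ (m : ℕ) (Hs : Fin m → ChainOp n d), (∀ s, IsLocalHam n d k (Hs s)) →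
    ∃ A : (Fin m → SignType) → ChainOp n d,
      multiAd Hs O = ∑ π, A π ∧
      ∀ π, SupportedOn (A π)
          (chainInterval n (a - (k - 1) * negCt π) (b + (k - 1) * posCt π)) ∧
        ‖A π‖ ≤ ‖O‖ * ∏ s, (2 * (Kfac k L π s : ℝ)) := by
  intro m
  induction m with
  | zero =>
    intro Hs _
    refine ⟨fun _ => O, ?_, fun π => ⟨?_, ?_⟩⟩
    · show O = ∑ _π : Fin 0 → SignType, O
      simp
    · have h0 : negCt π = 0 := by simp [negCt]
      have h1 : posCt π = 0 := by simp [posCt]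
      rw [h0, h1]
      simpa using hO
    · simp
  | succ m IH =>
    intro Hs hHs
    obtain ⟨h, hHsum, hterms⟩ := hHs (Fin.last m)
    obtain ⟨A, hAsum, hAprops⟩ := IH (fun j => Hs j.castSucc) (fun s => hHs s.castSucc)
    set aP : (Fin m → SignType) → ℕ := fun π => a - (k - 1) * negCt π with haP
    set bP : (Fin m → SignType) → ℕ := fun π => b + (k - 1) * posCt π with hbP
    set cls : (Fin m → SignType) → SignType → Finset (Fin n) := fun π σ =>
      Finset.univ.filter fun j => tagF k (aP π) (bP π) j = σ with hcls
    set A' : (Fin (m + 1) → SignType) → ChainOp n d := fun π' =>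
      ∑ j ∈ cls (fun s => π' s.castSucc) (π' (Fin.last m)),
        ad (h j) (A (fun s => π' s.castSucc)) with hA'
    have hsupp : ∀ π, SupportedOn (A π) (chainInterval n (aP π) (bP π)) :=
      fun π => (hAprops π).1
    have hjsupp : ∀ j : Fin n,
        SupportedOn (h j) (chainInterval n (j : ℕ) ((j : ℕ) + (k - 1))) := by
      intro j
      have := (hterms j).1
      have heq : (j : ℕ) + k - 1 = (j : ℕ) + (k - 1) := by omega
      rwa [heq] at this
    have habP : ∀ π, aP π + k ≤ bP π + 2 := by
      intro π
      have h1 : aP π ≤ a := Nat.sub_le _ _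
      have h2 : b ≤ bP π := Nat.le_add_right _ _
      omega
    refine ⟨A', ?_, ?_⟩
    · have e1 : multiAd Hs O
          = ad (Hs (Fin.last m)) (multiAd (fun j => Hs j.castSucc) O) := rfl
      rw [e1, hAsum, ad_sum_right, hHsum]
      calc ∑ π, ad (∑ j, h j) (A π)
          = ∑ π, ∑ σ : SignType, ∑ j ∈ cls π σ, ad (h j) (A π) := by
            refine Finset.sum_congr rfl fun π _ => ?_
            rw [ad_sum_left]
            exact (Finset.sum_fiberwise _ _ _).symm
        _ = ∑ p : (Fin m → SignType) × SignType, ∑ j ∈ cls p.1 p.2, ad (h j) (A p.1) :=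
            (Fintype.sum_prod_type
              (f := fun p : (Fin m → SignType) × SignType =>
                ∑ j ∈ cls p.1 p.2, ad (h j) (A p.1))).symm
        _ = ∑ π', A' π' := by
            set e : ((Fin m → SignType) × SignType) ≃ (Fin (m + 1) → SignType) :=
              (Equiv.prodComm _ _).trans (Fin.snocEquiv fun _ => SignType) with he
            refine Fintype.sum_equiv e
              (fun p : (Fin m → SignType) × SignType =>
                ∑ j ∈ cls p.1 p.2, ad (h j) (A p.1)) A' fun p => ?_
            have hc : (fun s : Fin m => (e p) s.castSucc) = p.1 := by
              funext s
              simp [he, Fin.snocEquiv, Fin.snoc_castSucc]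
            have hl : (e p) (Fin.last m) = p.2 := by
              simp [he, Fin.snocEquiv, Fin.snoc_last]
            rw [hA']
            beta_reduce
            rw [hc, hl]
    · intro π'
      set σ := π' (Fin.last m) with hσ
      set π : Fin m → SignType := fun s => π' s.castSucc with hπ
      have hAπ : ‖A π‖ ≤ ‖O‖ * ∏ s, (2 * (Kfac k L π s : ℝ)) := (hAprops π).2
      have hAπ0 : (0 : ℝ) ≤ ‖A π‖ := norm_nonneg _
      have hprod0 : (0 : ℝ) ≤ ∏ s, (2 * (Kfac k L π s : ℝ)) :=
        Finset.prod_nonneg fun s _ => by positivity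
      have hnegCt' : negCt π' = negCt π + (if σ = -1 then 1 else 0) := by
        unfold negCt
        rw [card_filter_fin_succ (fun j => π' j = -1)]
      have hposCt' : posCt π' = posCt π + (if σ = 1 then 1 else 0) := by
        unfold posCt
        rw [card_filter_fin_succ (fun j => π' j = 1)]
      have hprodsplit : (∏ s : Fin (m + 1), (2 * (Kfac k L π' s : ℝ)))
          = (∏ s : Fin m, (2 * (Kfac k L π s : ℝ))) * (2 * (Kfac k L π' (Fin.last m) : ℝ)) := by
        rw [Fin.prod_univ_castSucc]
        congr 1
        refine Finset.prod_congr rfl fun s _ => ?_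
        rw [kfac_castSucc]
      have key : ∀ σval : SignType, σ = σval →
          SupportedOn (A' π') (chainInterval n (a - (k - 1) * negCt π') (b + (k - 1) * posCt π'))
            ∧ ‖A' π'‖ ≤ 2 * (Kfac k L π' (Fin.last m) : ℝ) * ‖A π‖ := by
        intro σval hσval
        have hπlast : π' (Fin.last m) = σval := by rw [← hσ]; exact hσval
        have hA'eq : A' π' = ∑ j ∈ cls π σ, ad (h j) (A π) := rfl
        have habπ := habP π
        have haPv : aP π = a - (k - 1) * negCt π := rfl
        have hbPv : bP π = b + (k - 1) * posCt π := rfl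
        cases σval with
        | neg =>
          have hne0 : π' (Fin.last m) ≠ 0 := by rw [hπlast]; decide
          have hk1 : Kfac k L π' (Fin.last m) = k - 1 := kfac_last_ne _ _ _ hne0
          have hmem : ∀ j : Fin n, j ∈ cls π σ ↔ (j : ℕ) < aP π := by
            intro j
            simp only [hcls, Finset.mem_filter, Finset.mem_univ, true_and, hσval]
            exact tagF_eq_neg_iff
          set S' : Finset (Fin n) :=
            (cls π σ).filter (fun j => aP π ≤ (j : ℕ) + (k - 1)) with hS'
          have hzero : ∀ j ∈ cls π σ, j ∉ S' → ad (h j) (A π) = 0 := by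
            intro j hj hj'
            have h1 : (j : ℕ) + (k - 1) < aP π := by
              by_contra hc
              exact hj' (Finset.mem_filter.mpr ⟨hj, by omega⟩)
            exact ad_eq_zero_of_disjoint (hjsupp j) (hsupp π) (chainInterval_disjoint_left h1)
          have hsumeq : ∑ j ∈ cls π σ, ad (h j) (A π) = ∑ j ∈ S', ad (h j) (A π) :=
            (Finset.sum_subset (Finset.filter_subset _ _) hzero).symm
          have hcard : S'.card ≤ k - 1 := by
            refine le_trans (card_le_of_val_mem_Ico S' (aP π - (k - 1)) (aP π) ?_) (by omega)
            intro j hj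
            rw [hS', Finset.mem_filter] at hj
            have h1 := (hmem j).mp hj.1
            have h2 := hj.2
            rw [Finset.mem_Ico]
            omega
          have hng : negCt π' = negCt π + 1 := by
            rw [hnegCt', hσval, if_pos (by decide)]
          have hpg : posCt π' = posCt π := by
            rw [hposCt', hσval, if_neg (by decide)]
            omega
          constructor
          · rw [hA'eq, hng, hpg]
            have hae : a - (k - 1) * (negCt π + 1) = aP π - (k - 1) := by
              rw [Nat.mul_succ]
              simp only [haP]
              omega
            rw [hae]
            refine supportedOn_sum _ _ _ fun j hj => ?_
            have hjlt := (hmem j).mp hj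
            by_cases hc : aP π ≤ (j : ℕ) + (k - 1)
            · refine supportedOn_ad ?_ ?_
              · exact supportedOn_mono (hjsupp j)
                  (chainInterval_subset (by omega) (by omega))
              · exact supportedOn_mono (hsupp π)
                  (chainInterval_subset (Nat.sub_le _ _) le_rfl)
            · rw [ad_eq_zero_of_disjoint (hjsupp j) (hsupp π)
                (chainInterval_disjoint_left (by omega))]
              exact supportedOn_zero _
          · rw [hA'eq, hsumeq, hk1]
            refine le_trans (norm_sum_ad_le S' h (fun j _ => (hterms j).2) (A π)) ?_
            have hcast : (S'.card : ℝ) ≤ ((k - 1 : ℕ) : ℝ) := Nat.cast_le.mpr hcard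
            nlinarith [norm_nonneg (A π)]
        | pos =>
          have hne0 : π' (Fin.last m) ≠ 0 := by rw [hπlast]; decide
          have hk1 : Kfac k L π' (Fin.last m) = k - 1 := kfac_last_ne _ _ _ hne0
          have hmem : ∀ j : Fin n, j ∈ cls π σ ↔
              ¬ (j : ℕ) < aP π ∧ ¬ (j : ℕ) + (k - 1) ≤ bP π := by
            intro j
            simp only [hcls, Finset.mem_filter, Finset.mem_univ, true_and, hσval]
            exact tagF_eq_pos_iff
          set S' : Finset (Fin n) :=
            (cls π σ).filter (fun j => (j : ℕ) ≤ bP π) with hS'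
          have hzero : ∀ j ∈ cls π σ, j ∉ S' → ad (h j) (A π) = 0 := by
            intro j hj hj'
            have h1 : bP π < (j : ℕ) := by
              by_contra hc
              exact hj' (Finset.mem_filter.mpr ⟨hj, by omega⟩)
            exact ad_eq_zero_of_disjoint (hjsupp j) (hsupp π) (chainInterval_disjoint_right h1)
          have hsumeq : ∑ j ∈ cls π σ, ad (h j) (A π) = ∑ j ∈ S', ad (h j) (A π) :=
            (Finset.sum_subset (Finset.filter_subset _ _) hzero).symm
          have hcard : S'.card ≤ k - 1 := by
            refine le_trans (card_le_of_val_mem_Ico S' (bP π + 2 - k) (bP π + 1) ?_) (by omega)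
            intro j hj
            rw [hS', Finset.mem_filter] at hj
            have h1 := (hmem j).mp hj.1
            have h2 := hj.2
            rw [Finset.mem_Ico]
            omega
          have hng : negCt π' = negCt π := by
            rw [hnegCt', hσval, if_neg (by decide)]
            omega
          have hpg : posCt π' = posCt π + 1 := by
            rw [hposCt', hσval, if_pos (by decide)]
          constructor
          · rw [hA'eq, hng, hpg]
            have hbe : b + (k - 1) * (posCt π + 1) = bP π + (k - 1) := by
              rw [Nat.mul_succ]
              simp only [hbP]
              omega
            rw [hbe]
            refine supportedOn_sum _ _ _ fun j hj => ?_
            have hjm := (hmem j).mp hj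
            by_cases hc : (j : ℕ) ≤ bP π
            · refine supportedOn_ad ?_ ?_
              · exact supportedOn_mono (hjsupp j)
                  (chainInterval_subset (by omega) (by omega))
              · exact supportedOn_mono (hsupp π)
                  (chainInterval_subset le_rfl (Nat.le_add_right _ _))
            · rw [ad_eq_zero_of_disjoint (hjsupp j) (hsupp π)
                (chainInterval_disjoint_right (by omega))]
              exact supportedOn_zero _
          · rw [hA'eq, hsumeq, hk1]
            refine le_trans (norm_sum_ad_le S' h (fun j _ => (hterms j).2) (A π)) ?_
            have hcast : (S'.card : ℝ) ≤ ((k - 1 : ℕ) : ℝ) := Nat.cast_le.mpr hcard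
            nlinarith [norm_nonneg (A π)]
        | zero =>
          have h00 : π' (Fin.last m) = 0 := by rw [hπlast]; rfl
          have hk0 : Kfac k L π' (Fin.last m) = L + (k - 1) * nzCt π :=
            kfac_last_zero k L π' h00
          have hmem : ∀ j : Fin n, j ∈ cls π σ ↔
              ¬ (j : ℕ) < aP π ∧ (j : ℕ) + (k - 1) ≤ bP π := by
            intro j
            simp only [hcls, Finset.mem_filter, Finset.mem_univ, true_and, hσval]
            exact tagF_eq_zero_iff
          have hnz : (k - 1) * nzCt π = (k - 1) * negCt π + (k - 1) * posCt π := by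
            rw [← negCt_add_posCt, Nat.mul_add]
          have hcard : (cls π σ).card ≤ L + (k - 1) * nzCt π := by
            refine le_trans
              (card_le_of_val_mem_Ico _ (aP π) (bP π + 1 - (k - 1)) ?_) ?_
            · intro j hj
              have h1 := (hmem j).mp hj
              rw [Finset.mem_Ico]
              omega
            · simp only [haP, hbP]
              omega
          have hng : negCt π' = negCt π := by
            rw [hnegCt', hσval, if_neg (by decide)]
            omega
          have hpg : posCt π' = posCt π := by
            rw [hposCt', hσval, if_neg (by decide)]
            omega
          constructor
          · rw [hA'eq, hng, hpg]
            refine supportedOn_sum _ _ _ fun j hj => ?_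
            have hjm := (hmem j).mp hj
            refine supportedOn_ad ?_ ?_
            · exact supportedOn_mono (hjsupp j)
                (chainInterval_subset (by omega) (by omega))
            · exact supportedOn_mono (hsupp π) (chainInterval_subset le_rfl le_rfl)
          · rw [hA'eq, hk0]
            refine le_trans (norm_sum_ad_le _ h (fun j _ => (hterms j).2) (A π)) ?_
            have hcast : ((cls π σ).card : ℝ) ≤ ((L + (k - 1) * nzCt π : ℕ) : ℝ) :=
              Nat.cast_le.mpr hcard
            nlinarith [norm_nonneg (A π)]
      have hmain := key σ rfl
      refine ⟨hmain.1, ?_⟩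
      calc ‖A' π'‖ ≤ 2 * (Kfac k L π' (Fin.last m) : ℝ) * ‖A π‖ := hmain.2
        _ ≤ 2 * (Kfac k L π' (Fin.last m) : ℝ) * (‖O‖ * ∏ s, (2 * (Kfac k L π s : ℝ))) := by
            apply mul_le_mul_of_nonneg_left hAπ
            positivity
        _ = ‖O‖ * ∏ s : Fin (m + 1), (2 * (Kfac k L π' s : ℝ)) := by
            rw [hprodsplit]; ring

lemma pow_le_rpow_lambert {M x : ℝ} (hx1 : 1 ≤ x) (hM : M = x * (1 + Real.log x))
    (z : ℕ) (hzM : (z : ℝ) ≤ M) : ((M - z) ^ z : ℝ) ≤ x ^ (M - x) := by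
  have hx0 : (0 : ℝ) < x := lt_of_lt_of_le one_pos hx1
  set t := Real.log x with ht
  have ht0 : 0 ≤ t := Real.log_nonneg hx1
  have hMx : M - x = x * t := by rw [hM]; ring
  have hR1 : (1 : ℝ) ≤ x ^ (M - x) := Real.one_le_rpow hx1 (by nlinarith)
  rcases Nat.eq_zero_or_pos z with hz | hz
  · subst hz; simpa using hR1
  · rcases eq_or_lt_of_le hzM with heq | hlt
    · have h0 : M - (z : ℝ) = 0 := by linarith
      rw [h0, zero_pow (by omega)]
      linarith
    · set y := M - (z : ℝ) with hy
      have hy0 : 0 < y := by rw [hy]; linarith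
      have htan : x * (Real.log y - Real.log x) ≤ y - x := by
        have h1 : Real.log (y / x) ≤ y / x - 1 := Real.log_le_sub_one_of_pos (by positivity)
        have h2 : Real.log (y / x) = Real.log y - Real.log x :=
          Real.log_div (ne_of_gt hy0) (ne_of_gt hx0)
        rw [h2] at h1
        have h3 := mul_le_mul_of_nonneg_left h1 hx0.le
        calc x * (Real.log y - Real.log x) ≤ x * (y / x - 1) := h3
          _ = y - x := by field_simp
      have hkey : Real.log y * (z : ℝ) ≤ t * (M - x) := by
        have hz1 : (1 : ℝ) ≤ (z : ℝ) := by exact_mod_cast hz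
        have hyv : y = x + x * t - z := by rw [hy, hM]; ring
        rw [hMx]
        rw [← mul_le_mul_iff_right₀ hx0]
        have h4 : x * Real.log y * (z : ℝ) ≤ (x * t + y - x) * (z : ℝ) := by
          apply mul_le_mul_of_nonneg_right _ (by linarith)
          nlinarith [htan]
        calc x * (Real.log y * (z : ℝ)) = x * Real.log y * (z : ℝ) := by ring
          _ ≤ (x * t + y - x) * (z : ℝ) := h4
          _ ≤ x * (t * (x * t)) := by nlinarith [sq_nonneg (x * t - (z : ℝ))]
      calc (M - (z : ℝ)) ^ z = y ^ ((z : ℕ) : ℝ) := by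
            rw [← hy, Real.rpow_natCast]
        _ = Real.exp (Real.log y * (z : ℝ)) := by
            rw [Real.rpow_def_of_pos hy0]
        _ ≤ Real.exp (t * (M - x)) := Real.exp_le_exp.mpr hkey
        _ = x ^ (M - x) := by
            rw [Real.rpow_def_of_pos hx0]

lemma sum_prod_kfac_le (k m L : ℕ) (hk : 2 ≤ k) (aT M x : ℝ)
    (haT : aT = (L : ℝ) / (k : ℝ)) (hm : 1 ≤ m) (hM : M = (m : ℝ) + aT)
    (hx1 : 1 ≤ x) (hMx : M = x * (1 + Real.log x)) :
    ∑ π : Fin m → SignType, ∏ s, (2 * (Kfac k L π s : ℝ))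
      ≤ (6 * (k : ℝ)) ^ m * x ^ (M - x) := by
  have hk0 : (0 : ℝ) < (k : ℝ) := by
    have : 0 < k := by omega
    exact_mod_cast this
  have haT0 : (0 : ℝ) ≤ aT := by
    rw [haT]; positivity
  have hxM : (0 : ℝ) ≤ x ^ (M - x) :=
    Real.rpow_nonneg (by linarith) _
  have hbound : ∀ π : Fin m → SignType,
      ∏ s, (2 * (Kfac k L π s : ℝ)) ≤ (2 * (k : ℝ)) ^ m * x ^ (M - x) := by
    intro π
    set z : ℕ := (Finset.univ.filter fun s => π s = 0).card with hz
    have hzm : z ≤ m := le_trans (Finset.card_filter_le _ _) (by simp)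
    have hzr : (z : ℝ) ≤ (m : ℝ) := by exact_mod_cast hzm
    have hnzC : nzCt π = m - z := by
      unfold nzCt
      simp only [ne_eq]
      have := Finset.card_filter_add_card_filter_not
        (s := (Finset.univ : Finset (Fin m))) (p := fun s => π s = 0)
      simp only [Finset.card_univ, Fintype.card_fin] at this
      omega
    have hMz0 : (0 : ℝ) ≤ M - z := by rw [hM]; linarith
    have step1 : ∏ s, (2 * (Kfac k L π s : ℝ))
        ≤ ∏ s, ((2 * (k : ℝ)) * (if π s = 0 then (M - z) else 1)) := by
      refine Finset.prod_le_prod (fun s _ => by positivity) (fun s _ => ?_)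
      by_cases hs : π s = 0
      · rw [if_pos hs]
        unfold Kfac
        rw [if_pos hs]
        set c : ℕ := (Finset.univ.filter fun j : Fin m => j < s ∧ π j ≠ 0).card with hcdef
        have hnb : c ≤ m - z := by
          rw [← hnzC]
          unfold nzCt
          refine Finset.card_le_card fun j hj => ?_
          simp only [Finset.mem_filter, Finset.mem_univ, true_and] at hj ⊢
          exact hj.2
        have h2 : (k - 1) * c ≤ k * (m - z) := Nat.mul_le_mul (by omega) hnb
        have h4 : ((k * (m - z) : ℕ) : ℝ) = (k : ℝ) * ((m : ℝ) - (z : ℝ)) := by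
          push_cast [Nat.cast_sub hzm]
          ring
        have h3 : ((L + (k - 1) * c : ℕ) : ℝ)
            ≤ (L : ℝ) + (k : ℝ) * ((m : ℝ) - (z : ℝ)) := by
          rw [← h4]
          push_cast
          have h5 : (((k - 1) * c : ℕ) : ℝ) ≤ ((k * (m - z) : ℕ) : ℝ) := by
            exact_mod_cast h2
          push_cast at h5
          linarith
        have hL : (L : ℝ) = (k : ℝ) * aT := by rw [haT]; field_simp
        calc 2 * ((L + (k - 1) * c : ℕ) : ℝ)
            ≤ 2 * ((k : ℝ) * aT + (k : ℝ) * ((m : ℝ) - (z : ℝ))) := by linarith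
          _ = (2 * (k : ℝ)) * (M - (z : ℝ)) := by rw [hM]; ring
      · rw [if_neg hs]
        unfold Kfac
        rw [if_neg hs, mul_one]
        have hcst : ((k - 1 : ℕ) : ℝ) ≤ (k : ℝ) := by
          have : (k - 1 : ℕ) ≤ k := by omega
          exact_mod_cast this
        linarith
    have step2 : ∏ s : Fin m, ((2 * (k : ℝ)) * (if π s = 0 then (M - z) else 1))
        = (2 * (k : ℝ)) ^ m * (M - z) ^ z := by
      rw [Finset.prod_mul_distrib, Finset.prod_const, Finset.card_univ, Fintype.card_fin]
      congr 1
      rw [Finset.prod_ite, Finset.prod_const, Finset.prod_const, one_pow, mul_one, hz]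
    have step3 : ((M - z) ^ z : ℝ) ≤ x ^ (M - x) := by
      apply pow_le_rpow_lambert hx1 hMx
      rw [hM]; linarith
    calc ∏ s, (2 * (Kfac k L π s : ℝ)) ≤ (2 * (k : ℝ)) ^ m * (M - z) ^ z := by
          rw [← step2]; exact step1
      _ ≤ (2 * (k : ℝ)) ^ m * x ^ (M - x) :=
          mul_le_mul_of_nonneg_left step3 (by positivity)
  calc ∑ π : Fin m → SignType, ∏ s, (2 * (Kfac k L π s : ℝ))
      ≤ ∑ _π : Fin m → SignType, (2 * (k : ℝ)) ^ m * x ^ (M - x) :=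
        Finset.sum_le_sum (fun π _ => hbound π)
    _ = (Fintype.card (Fin m → SignType) : ℝ) * ((2 * (k : ℝ)) ^ m * x ^ (M - x)) := by
        rw [Finset.sum_const, Finset.card_univ, nsmul_eq_mul]
    _ = (6 * (k : ℝ)) ^ m * x ^ (M - x) := by
        have hcard : Fintype.card (Fin m → SignType) = 3 ^ m := by
          rw [Fintype.card_fun, Fintype.card_fin]
          have h3 : Fintype.card SignType = 3 := by decide
          rw [h3]

        rw [hcard]
        push_cast
        ring_nf
        rw [show (6 : ℝ) ^ m = 2 ^ m * 3 ^ m by rw [← mul_pow]; norm_num]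
        ring

lemma multiAd_eq_zero_of_empty (O : ChainOp n d)
    (hO : SupportedOn O (∅ : Finset (Fin n))) :
    ∀ m : ℕ, 1 ≤ m → ∀ Hs : Fin m → ChainOp n d, multiAd Hs O = 0 := by
  intro m
  induction m with
  | zero => intro hm; omega
  | succ m IH =>
    intro _ Hs
    show ad (Hs (Fin.last m)) (multiAd (fun j => Hs j.castSucc) O) = 0
    rcases Nat.eq_zero_or_pos m with hm | hm
    · subst hm
      have hmlt : multiAd (fun j : Fin 0 => Hs j.castSucc) O = O := rfl
      rw [hmlt]
      exact ad_eq_zero_of_disjoint (supportedOn_univ _) hO (by simp)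
    · rw [IH hm (fun j => Hs j.castSucc), ad_zero]

lemma chainInterval_card (a b : ℕ) (hb : b < n) :
    (chainInterval n a b).card = b + 1 - a := by
  have : (chainInterval n a b).card = (Finset.Icc a b).card := by
    refine Finset.card_bij (fun (i : Fin n) _ => (i : ℕ)) ?_ ?_ ?_
    · intro i hi
      rw [mem_chainInterval] at hi
      rw [Finset.mem_Icc]
      exact hi
    · intro i _ i' _ hii
      exact Fin.val_injective hii
    · intro i hi
      rw [Finset.mem_Icc] at hi
      exact ⟨⟨i, lt_of_le_of_lt hi.2 hb⟩, mem_chainInterval.mpr hi, rfl⟩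
  rw [this, Nat.card_Icc]

lemma chainInterval_trunc (a b : ℕ) (hn : 1 ≤ n) :
    chainInterval n a b = chainInterval n a (min b (n - 1)) := by
  ext i
  rw [mem_chainInterval, mem_chainInterval]
  have := i.isLt
  omega

/-- Corollary 4 of the paper: the iterated-commutator norm bound in Lambert-W form. With
`aTilde = l₀/k` and `w > 0` the solution of `w·e^w = e·(m+aTilde)` (i.e. `w = W[e(m+aTilde)]`, so that
`(m+aTilde)/w = (m+aTilde)/W[e(m+aTilde)]`), one has
`‖ad_{H^{(m)}} ⋯ ad_{H^{(1)}}(O)‖ ≤ ‖O‖·(6k)^m·((m+aTilde)/w)^{(m+aTilde) − (m+aTilde)/w}`. -/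
theorem multi_commutator_norm_bound_lambertW
    (n d k : ℕ) (hn : 1 ≤ n) (hd : 2 ≤ d) (hk : 2 ≤ k)
    (m : ℕ) (hm : 1 ≤ m)
    (Hs : Fin m → ChainOp n d) (hHs : ∀ s : Fin m, IsLocalHam n d k (Hs s))
    (a b l₀ : ℕ) (O : ChainOp n d)
    (hO : SupportedOn O (chainInterval n a b))
    (hl₀ : (chainInterval n a b).card = l₀)
    (aTilde : ℝ) (haTilde : aTilde = (l₀ : ℝ) / (k : ℝ))
    (w : ℝ) (hw : 0 < w) (hwe : w * Real.exp w = Real.exp 1 * ((m : ℝ) + aTilde)) :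
    ‖multiAd Hs O‖ ≤
      ‖O‖ * (6 * (k : ℝ)) ^ m *
        (((m : ℝ) + aTilde) / w) ^ (((m : ℝ) + aTilde) - ((m : ℝ) + aTilde) / w) := by
  have hk0 : (0 : ℝ) < (k : ℝ) := by
    have : 0 < k := by omega
    exact_mod_cast this
  have haT0 : (0 : ℝ) ≤ aTilde := by rw [haTilde]; positivity
  have hm1 : (1 : ℝ) ≤ (m : ℝ) := by exact_mod_cast hm
  set M : ℝ := (m : ℝ) + aTilde with hMdef
  have hM1 : (1 : ℝ) ≤ M := by rw [hMdef]; linarith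
  set x : ℝ := M / w with hxdef
  have hw1 : (1 : ℝ) ≤ w := by
    by_contra hcon
    push_neg at hcon
    have h1 : Real.exp w < Real.exp 1 := Real.exp_lt_exp.mpr hcon
    nlinarith [Real.exp_pos w, Real.exp_pos 1, hwe]
  have hxval : x = Real.exp (w - 1) := by
    rw [hxdef, Real.exp_sub, div_eq_div_iff (ne_of_gt hw) (ne_of_gt (Real.exp_pos 1))]
    linarith [hwe]
  have hx1 : (1 : ℝ) ≤ x := by
    rw [hxval]
    calc (1 : ℝ) = Real.exp 0 := Real.exp_zero.symm
      _ ≤ Real.exp (w - 1) := Real.exp_le_exp.mpr (by linarith)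
  have hlogx : Real.log x = w - 1 := by rw [hxval, Real.log_exp]
  have hMx : M = x * (1 + Real.log x) := by
    rw [hlogx, hxdef]
    have h2 : (1 : ℝ) + (w - 1) = w := by ring
    rw [h2]
    field_simp
  by_cases hl0 : l₀ = 0
  · have hemp : chainInterval n a b = ∅ := Finset.card_eq_zero.mp (by rw [hl₀, hl0])
    rw [hemp] at hO
    rw [multiAd_eq_zero_of_empty O hO m hm Hs, norm_zero]
    have hxp : (0 : ℝ) ≤ x ^ (M - x) := Real.rpow_nonneg (by linarith) _
    positivity
  · set b₁ := min b (n - 1) with hb₁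
    have htr : chainInterval n a b = chainInterval n a b₁ := chainInterval_trunc a b hn
    have hb₁n : b₁ < n := by omega
    have hcard : b₁ + 1 - a = l₀ := by
      rw [← chainInterval_card a b₁ hb₁n, ← htr, hl₀]
    have hab₁ : a ≤ b₁ := by omega
    obtain ⟨A, hsum, hprops⟩ := main_ind k hk a (b₁ + (k - 1)) l₀ (by omega) O
      (by
        rw [htr] at hO
        exact supportedOn_mono hO (chainInterval_subset le_rfl (by omega))) m Hs hHs
    rw [hsum]
    calc ‖∑ π : Fin m → SignType, A π‖ ≤ ∑ π : Fin m → SignType, ‖A π‖ := norm_sum_le _ _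
      _ ≤ ∑ π : Fin m → SignType, ‖O‖ * ∏ s, (2 * (Kfac k l₀ π s : ℝ)) :=
          Finset.sum_le_sum (fun π _ => (hprops π).2)
      _ = ‖O‖ * ∑ π : Fin m → SignType, ∏ s, (2 * (Kfac k l₀ π s : ℝ)) := by
          rw [Finset.mul_sum]
      _ ≤ ‖O‖ * ((6 * (k : ℝ)) ^ m * x ^ (M - x)) := by
          refine mul_le_mul_of_nonneg_left ?_ (norm_nonneg O)
          exact sum_prod_kfac_le k m l₀ hk aTilde M x haTilde hm hMdef hx1 hMx
      _ = ‖O‖ * (6 * (k : ℝ)) ^ m * x ^ (M - x) := by ring
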